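/- arXiv:1403.4494 — 4 statements merged into one kernel-verified Lean document; each statement's English description precedes it below -/
import Mathlib

section
/- For x < 0, the derivative of φ₁(x) = -1 + (1-2x)·ln(1-2x) + 2x·ln(-2x) equals 2·ln(-2x/(1-2x)), which is strictly negative; consequently the function J_H(s) = φ(s - s_c) - φ(-s_c) is concave on (-∞, s_c). -/
open Real Set

noncomputable def phi (x : ℝ) : ℝ :=
  -(3/2) * x + x^2 * Real.log (-2 * x) - (1 - 2*x)^2 / 4 * Real.log (1 - 2*x)

noncomputable def phi1 (x : ℝ) : ℝ :=
  -1 + (1 - 2*x) * Real.log (1 - 2*x) + 2*x * Real.log (-2 * x)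

lemma aux_pos {x : ℝ} (hx : x < 0) : 0 < -2 * x := by linarith
lemma aux_pos' {x : ℝ} (hx : x < 0) : 0 < 1 - 2 * x := by linarith

lemma hasDerivAt_phi1 {x : ℝ} (hx : x < 0) :
    HasDerivAt phi1 (2 * Real.log (-2 * x / (1 - 2*x))) x := by
  have h2 : HasDerivAt (fun x : ℝ => 1 - 2*x) (-2) x := by
    have := (hasDerivAt_id' x).const_mul (2:ℝ) |>.const_sub 1; rw [show -(2*(1:ℝ)) = -2 by norm_num] at this; exact this
  have h3 : HasDerivAt (fun x : ℝ => -2*x) (-2) x := by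
    simpa using (hasDerivAt_id x).const_mul (-2)
  have hlog1 : HasDerivAt (fun x : ℝ => Real.log (1 - 2*x)) (-2 / (1 - 2*x)) x :=
    by simpa only [Function.comp_def, div_eq_inv_mul] using (Real.hasDerivAt_log (aux_pos' hx).ne').comp x h2
  have hlog2 : HasDerivAt (fun x : ℝ => Real.log (-2*x)) (-2 / (-2*x)) x :=
    by simpa only [Function.comp_def, div_eq_inv_mul] using (Real.hasDerivAt_log (aux_pos hx).ne').comp x h3
  have hA : HasDerivAt (fun x : ℝ => (1 - 2*x) * Real.log (1 - 2*x))
      ((-2) * Real.log (1 - 2*x) + (1 - 2*x) * (-2 / (1 - 2*x))) x := h2.mul hlog1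
  have h2x : HasDerivAt (fun x : ℝ => 2*x) (2) x := by
    simpa using (hasDerivAt_id x).const_mul (2 : ℝ)
  have hB : HasDerivAt (fun x : ℝ => 2*x * Real.log (-2*x))
      (2 * Real.log (-2*x) + 2*x * (-2 / (-2*x))) x := h2x.mul hlog2
  have h := (hA.add hB).const_add (-1 : ℝ)
  have hx0 : x ≠ 0 := hx.ne
  have e1 : (1 - 2*x) * (-2 / (1 - 2*x)) = -2 := by
    rw [mul_comm, div_mul_cancel₀ _ (aux_pos' hx).ne']
  have e2 : 2*x * (-2 / (-2*x)) = 2 := by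
    field_simp
  have hv : -2 * Real.log (1 - 2*x) + (1 - 2*x) * (-2 / (1 - 2*x)) +
      (2 * Real.log (-2*x) + 2*x * (-2 / (-2*x))) =
      2 * Real.log (-2 * x / (1 - 2*x)) := by
    rw [Real.log_div (aux_pos hx).ne' (aux_pos' hx).ne', e1, e2]; ring
  rw [← hv]
  exact h.congr_of_eventuallyEq (Filter.Eventually.of_forall fun y => by
    simp only [phi1, Pi.add_apply]; ring)

lemma hasDerivAt_phi {x : ℝ} (hx : x < 0) : HasDerivAt phi (phi1 x) x := by
  have h2 : HasDerivAt (fun x : ℝ => 1 - 2*x) (-2) x := by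
    have := (hasDerivAt_id' x).const_mul (2:ℝ) |>.const_sub 1; rw [show -(2*(1:ℝ)) = -2 by norm_num] at this; exact this
  have h3 : HasDerivAt (fun x : ℝ => -2*x) (-2) x := by
    simpa using (hasDerivAt_id x).const_mul (-2)
  have hlog1 : HasDerivAt (fun x : ℝ => Real.log (1 - 2*x)) (-2 / (1 - 2*x)) x :=
    by simpa only [Function.comp_def, div_eq_inv_mul] using (Real.hasDerivAt_log (aux_pos' hx).ne').comp x h2
  have hlog2 : HasDerivAt (fun x : ℝ => Real.log (-2*x)) (-2 / (-2*x)) x :=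
    by simpa only [Function.comp_def, div_eq_inv_mul] using (Real.hasDerivAt_log (aux_pos hx).ne').comp x h3
  have hsq : HasDerivAt (fun x : ℝ => x^2) (2*x) x := by
    simpa using hasDerivAt_pow 2 x
  have hA : HasDerivAt (fun x : ℝ => x^2 * Real.log (-2*x))
      ((2*x) * Real.log (-2*x) + x^2 * (-2 / (-2*x))) x := hsq.mul hlog2
  have hsq2 : HasDerivAt (fun x : ℝ => (1 - 2*x)^2 / 4) ((2*(1-2*x)*(-2))/4) x := by
    simpa [mul_comm, mul_assoc] using ((h2.pow 2).div_const 4)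
  have hB : HasDerivAt (fun x : ℝ => (1 - 2*x)^2 / 4 * Real.log (1 - 2*x))
      ((2*(1-2*x)*(-2))/4 * Real.log (1 - 2*x) + (1 - 2*x)^2 / 4 * (-2 / (1 - 2*x))) x :=
    hsq2.mul hlog1
  have hlin : HasDerivAt (fun x : ℝ => -(3/2) * x) (-(3/2)) x := by
    simpa using (hasDerivAt_id x).const_mul (-(3/2) : ℝ)
  have h := (hlin.add hA).sub hB
  have hx0 : x ≠ 0 := hx.ne
  have h1 : (1 : ℝ) - 2*x ≠ 0 := (aux_pos' hx).ne'
  have e1 : x^2 * (-2 / (-2*x)) = x := by field_simp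
  have e2 : (1 - 2*x)^2 / 4 * (-2 / (1 - 2*x)) = -(1 - 2*x)/2 := by
    field_simp; ring
  have hv : -(3/2) + ((2*x) * Real.log (-2*x) + x^2 * (-2 / (-2*x))) -
      ((2*(1-2*x)*(-2))/4 * Real.log (1 - 2*x) + (1 - 2*x)^2 / 4 * (-2 / (1 - 2*x))) =
      phi1 x := by
    rw [e1, e2]; simp only [phi1]; ring
  rw [← hv]
  exact h.congr_of_eventuallyEq (Filter.Eventually.of_forall fun y => by
    simp only [phi, Pi.add_apply, Pi.sub_apply])

set_option linter.unusedVariables false in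
theorem phi1_deriv_neg_and_JH_concave (c : ℝ) (hc : 1 < c) :
    (∀ x : ℝ, x < 0 →
      HasDerivAt phi1 (2 * Real.log (-2 * x / (1 - 2*x))) x ∧
      2 * Real.log (-2 * x / (1 - 2*x)) < 0) ∧
    ConcaveOn ℝ (Set.Iio ((c - 1) / 2))
      (fun s => phi (s - (c - 1) / 2) - phi (-((c - 1) / 2))) := by
  have hneg : ∀ x : ℝ, x < 0 → 2 * Real.log (-2 * x / (1 - 2*x)) < 0 := by
    intro x hx
    have h1 : 0 < -2 * x / (1 - 2*x) := div_pos (aux_pos hx) (aux_pos' hx)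
    have h2 : -2 * x / (1 - 2*x) < 1 := by
      rw [div_lt_one (aux_pos' hx)]; linarith
    have := Real.log_neg h1 h2
    linarith
  refine ⟨fun x hx => ⟨hasDerivAt_phi1 hx, hneg x hx⟩, ?_⟩
  set sc := (c - 1) / 2 with hsc
  set f : ℝ → ℝ := fun s => phi (s - sc) - phi (-sc) with hf
  have hDf : ∀ x ∈ Set.Iio sc, HasDerivAt f (phi1 (x - sc)) x := by
    intro x hx
    have hshift : HasDerivAt (fun s : ℝ => s - sc) 1 x := by
      simpa using (hasDerivAt_id x).sub_const sc
    have hx' : x - sc < 0 := by simp at hx; linarith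
    have := ((hasDerivAt_phi hx').comp x hshift).sub_const (phi (-sc))
    simpa [hf] using this
  have hderiv_eq : ∀ x ∈ Set.Iio sc, deriv f x = phi1 (x - sc) := fun x hx =>
    (hDf x hx).deriv
  have hopen : IsOpen (Set.Iio sc) := isOpen_Iio
  have hDf2 : ∀ x ∈ Set.Iio sc,
      HasDerivAt (deriv f) (2 * Real.log (-2 * (x - sc) / (1 - 2*(x - sc)))) x := by
    intro x hx
    have hx' : x - sc < 0 := by simp at hx; linarith
    have hshift : HasDerivAt (fun s : ℝ => s - sc) 1 x := by
      simpa using (hasDerivAt_id x).sub_const sc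
    have h1 : HasDerivAt (fun s => phi1 (s - sc))
        (2 * Real.log (-2 * (x - sc) / (1 - 2*(x - sc)))) x := by
      simpa only [mul_one, Function.comp_def] using (hasDerivAt_phi1 hx').comp x hshift
    refine h1.congr_of_eventuallyEq ?_
    filter_upwards [hopen.mem_nhds hx] with y hy
    exact hderiv_eq y hy
  apply concaveOn_of_deriv2_nonpos (convex_Iio sc)
  · exact fun x hx => (hDf x hx).continuousAt.continuousWithinAt
  · rw [interior_Iio]
    exact fun x hx => ((hDf x hx).differentiableAt).differentiableWithinAt
  · rw [interior_Iio]
    exact fun x hx => ((hDf2 x hx).differentiableAt).differentiableWithinAt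
  · rw [interior_Iio]
    intro x hx
    have hx' : x - sc < 0 := by simp at hx; linarith
    have : deriv (deriv f) x = 2 * Real.log (-2 * (x - sc) / (1 - 2*(x - sc))) :=
      (hDf2 x hx).deriv
    simp only [Function.iterate_succ, Function.iterate_zero, Function.comp_apply, id]
    rw [this]
    exact (hneg _ hx').le
end

section
/- With the same density ρ(λ) = (1+2w)/(2πλ)·√((λ-λ₋)(λ₊-λ)) on (λ₋,λ₊), where λ_± = (1 ± √(1-2(s-s_c)))²/(1+2w), one has ∫_{λ₋}^{λ₊} λ·ρ(λ) dλ = (c - 2s)/(1+2w). -/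
open Real intervalIntegral

lemma semicircle_integral (a b : ℝ) (hab : a < b) :
    ∫ l in a..b, Real.sqrt ((l - a) * (b - l)) = Real.pi * (b - a)^2 / 8 := by
  set r : ℝ := (b - a) / 2 with hr
  have hr0 : 0 < r := by simp only [hr]; linarith
  have hd : b - a ≠ 0 := by linarith
  have key := intervalIntegral.integral_comp_mul_add (a := a) (b := b)
    (fun x => Real.sqrt (1 - x ^ 2)) (inv_ne_zero hr0.ne') (-((a + b) / 2) / r)
  have ea : r⁻¹ * a + -((a + b) / 2) / r = -1 := by
    rw [hr]; field_simp; ring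
  have eb : r⁻¹ * b + -((a + b) / 2) / r = 1 := by
    rw [hr]; field_simp; ring
  rw [ea, eb, integral_sqrt_one_sub_sq, inv_inv] at key
  have h1 : ∀ l : ℝ, Real.sqrt (1 - (r⁻¹ * l + -((a + b) / 2) / r) ^ 2)
      = Real.sqrt ((l - a) * (b - l)) * r⁻¹ := by
    intro l
    have h2 : 1 - (r⁻¹ * l + -((a + b) / 2) / r) ^ 2
        = ((l - a) * (b - l)) * (r⁻¹) ^ 2 := by
      field_simp
      ring
    rw [h2, Real.sqrt_mul' _ (sq_nonneg _), Real.sqrt_sq (by positivity)]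
  simp only [h1] at key
  rw [intervalIntegral.integral_mul_const] at key
  have : (∫ l in a..b, Real.sqrt ((l - a) * (b - l))) = r * (r * (Real.pi / 2)) := by
    rw [smul_eq_mul] at key
    field_simp at key ⊢
    linarith [key]
  rw [this, hr]
  ring

theorem tilted_MP_first_moment (c : ℝ) (hc : 1 ≤ c) (s w : ℝ)
    (hs : s < (c - 1) / 2) (hw : -1/2 < w) :
    (∫ l in ((1 - Real.sqrt (1 - 2 * (s - (c - 1) / 2)))^2 / (1 + 2*w))..(
        (1 + Real.sqrt (1 - 2 * (s - (c - 1) / 2)))^2 / (1 + 2*w)),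
      l * ((1 + 2*w) / (2 * Real.pi * l) *
        Real.sqrt ((l - (1 - Real.sqrt (1 - 2 * (s - (c - 1) / 2)))^2 / (1 + 2*w)) *
          ((1 + Real.sqrt (1 - 2 * (s - (c - 1) / 2)))^2 / (1 + 2*w) - l))))
      = (c - 2 * s) / (1 + 2 * w) := by
  have hw' : 0 < 1 + 2 * w := by linarith
  set D : ℝ := 1 - 2 * (s - (c - 1) / 2) with hD
  have hD1 : 1 < D := by simp only [hD]; linarith
  have hsq : 1 < Real.sqrt D := by
    rw [show (1:ℝ) = Real.sqrt 1 by simp]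
    exact Real.sqrt_lt_sqrt (by norm_num) hD1
  set A : ℝ := (1 - Real.sqrt D) ^ 2 / (1 + 2 * w) with hA
  set B : ℝ := (1 + Real.sqrt D) ^ 2 / (1 + 2 * w) with hB
  have hA0 : 0 < A := by
    apply div_pos _ hw'
    have : 1 - Real.sqrt D ≠ 0 := by linarith
    positivity
  have hAB : A < B := by
    rw [hA, hB, div_lt_div_iff_of_pos_right hw']
    nlinarith
  have hcong : (∫ l in A..B,
      l * ((1 + 2 * w) / (2 * Real.pi * l) * Real.sqrt ((l - A) * (B - l))))
      = ∫ l in A..B, (1 + 2 * w) / (2 * Real.pi) * Real.sqrt ((l - A) * (B - l)) := by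
    apply intervalIntegral.integral_congr
    intro l hl
    rw [Set.uIcc_of_le hAB.le] at hl
    have hl0 : l ≠ 0 := by have := hl.1; intro h; rw [h] at this; linarith
    have hpi := Real.pi_ne_zero
    field_simp
  rw [hcong, intervalIntegral.integral_const_mul, semicircle_integral A B hAB]
  have hBA : B - A = 4 * Real.sqrt D / (1 + 2 * w) := by
    rw [hA, hB, div_sub_div_same]
    congr 1
    ring
  have hDnn : (Real.sqrt D) ^ 2 = D := Real.sq_sqrt (by linarith)
  rw [hBA]
  have hcs : D = c - 2 * s := by rw [hD]; ring
  have hpi := Real.pi_ne_zero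
  field_simp
  rw [hDnn, hcs]
  ring
end

section
/- For c > 1, let a = (1-√c)² and b = (1+√c)². Then (1/(2π)) ∫_a^b (ln λ)·√((b-λ)(λ-a))/λ dλ = -1 + c·ln c - (c-1)·ln(c-1). -/
open Real intervalIntegral MeasureTheory Set

noncomputable section

namespace MPaux

def U (r θ : ℝ) : ℝ := 1 + 2 * r * Real.cos θ + r ^ 2

lemma U_lower {x t : ℝ} (hx : |x| ≤ t) (ht : t < 1) (θ : ℝ) : (1 - t) ^ 2 ≤ U x θ := by
  have h1 : |x * Real.cos θ| ≤ |x| := by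
    rw [abs_mul]
    exact mul_le_of_le_one_right (abs_nonneg _) (Real.abs_cos_le_one θ)
  have h2 : -|x| ≤ x * Real.cos θ := le_trans (neg_le_neg h1) (neg_abs_le _)
  have h3 : x ^ 2 = |x| ^ 2 := (sq_abs x).symm
  have h0 : (0:ℝ) ≤ |x| := abs_nonneg x
  unfold U
  nlinarith [hx, ht]

lemma U_pos {x t : ℝ} (hx : |x| ≤ t) (ht : t < 1) (θ : ℝ) : 0 < U x θ := by
  have h := U_lower hx ht θ
  have h2 : (0:ℝ) < (1 - t) ^ 2 := by
    have h3 : 0 < 1 - t := by linarith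
    positivity
  linarith

lemma U_ne {x t : ℝ} (hx : |x| ≤ t) (ht : t < 1) (θ : ℝ) : U x θ ≠ 0 :=
  (U_pos hx ht θ).ne'

lemma continuous_U (r : ℝ) : Continuous (U r) := by
  unfold U; fun_prop

lemma one_add_mul_cos_pos {r : ℝ} (h0 : 0 ≤ r) (h1 : r < 1) (θ : ℝ) :
    0 < 1 + r * Real.cos θ := by
  nlinarith [Real.neg_one_le_cos θ, Real.cos_le_one θ]

lemma hasDerivAt_arctanG {r : ℝ} (h0 : 0 ≤ r) (h1 : r < 1) (θ : ℝ) :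
    HasDerivAt (fun θ => Real.arctan (r * Real.sin θ / (1 + r * Real.cos θ)))
      (r * (Real.cos θ + r) / U r θ) θ := by
  have hden : (1 + r * Real.cos θ) ≠ 0 := (one_add_mul_cos_pos h0 h1 θ).ne'
  have hnum : HasDerivAt (fun θ => r * Real.sin θ) (r * Real.cos θ) θ :=
    (Real.hasDerivAt_sin θ).const_mul r
  have hden' : HasDerivAt (fun θ => 1 + r * Real.cos θ) (r * -Real.sin θ) θ :=
    ((Real.hasDerivAt_cos θ).const_mul r).const_add 1
  have h := (hnum.div hden' hden).arctan
  simp only [Pi.div_apply] at h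
  convert h using 1
  have hU : U r θ ≠ 0 := U_ne (le_of_eq (abs_of_nonneg h0)) h1 θ
  have hsc := Real.sin_sq_add_cos_sq θ
  have hsin2 : Real.sin θ ^ 2 = 1 - Real.cos θ ^ 2 := by linear_combination hsc
  have e1 : (r * Real.sin θ / (1 + r * Real.cos θ)) ^ 2
      = r ^ 2 * (1 - Real.cos θ ^ 2) / (1 + r * Real.cos θ) ^ 2 := by
    rw [div_pow, mul_pow, hsin2]
  have e2 : r * Real.sin θ * (r * -Real.sin θ) = -(r ^ 2 * (1 - Real.cos θ ^ 2)) := by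
    linear_combination (-(r ^ 2)) * hsc
  have hU' : (1 + 2 * r * Real.cos θ + r ^ 2) ≠ 0 := by
    simpa [U] using hU
  have e3 : 1 + r ^ 2 * (1 - Real.cos θ ^ 2) / (1 + r * Real.cos θ) ^ 2
      = U r θ / (1 + r * Real.cos θ) ^ 2 := by
    rw [U]; field_simp; ring
  rw [e1, e2, e3]
  rw [U]
  field_simp
  ring


lemma abs_le_self' {r : ℝ} (h0 : 0 ≤ r) : |r| ≤ r := le_of_eq (abs_of_nonneg h0)




/-- Poisson kernel integral. -/
lemma int_one_div {r : ℝ} (h0 : 0 ≤ r) (h1 : r < 1) :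
    ∫ θ in (0:ℝ)..π, 1 / U r θ = π / (1 - r ^ 2) := by
  have hr2 : 1 - r ^ 2 ≠ 0 := by nlinarith
  have key : ∫ θ in (0:ℝ)..π, 1 / U r θ
      = ((π - 2 * Real.arctan (r * Real.sin π / (1 + r * Real.cos π))) / (1 - r ^ 2))
        - ((0 - 2 * Real.arctan (r * Real.sin 0 / (1 + r * Real.cos 0))) / (1 - r ^ 2)) := by
    apply intervalIntegral.integral_eq_sub_of_hasDerivAt (f := fun θ =>
      (θ - 2 * Real.arctan (r * Real.sin θ / (1 + r * Real.cos θ))) / (1 - r ^ 2))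
    · intro θ _
      have h := ((hasDerivAt_id θ).sub ((hasDerivAt_arctanG h0 h1 θ).const_mul 2)).div_const
        (1 - r ^ 2)
      refine h.congr_deriv (Eq.symm ?_)
      have hU : U r θ ≠ 0 := U_ne (abs_le_self' h0) h1 θ
      field_simp
      rw [U]
      ring
    · apply Continuous.intervalIntegrable
      exact continuous_const.div (continuous_U r) (fun θ => U_ne (abs_le_self' h0) h1 θ)
  rw [key]
  simp [Real.sin_pi, Real.sin_zero]



lemma hasDerivAt_U_param (θ x : ℝ) :
    HasDerivAt (fun x => U x θ) (2 * Real.cos θ + 2 * x) x := by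
  have h1 : HasDerivAt (fun x : ℝ => 2 * x * Real.cos θ) (2 * Real.cos θ) x := by
    simpa [mul_comm, mul_assoc] using
      (((hasDerivAt_id x).const_mul 2).mul_const (Real.cos θ))
  have h2 : HasDerivAt (fun x : ℝ => x ^ 2) (2 * x) x := by
    simpa using hasDerivAt_pow 2 x
  simpa [U, Pi.add_def] using (h1.const_add 1).add h2

lemma hasDerivAt_int_log_mul (g : ℝ → ℝ) (hg : Continuous g) (Cg : ℝ)
    (hCg : ∀ θ, |g θ| ≤ Cg) {t r : ℝ} (ht1 : t < 1) (hr : r ∈ Icc 0 t) :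
    HasDerivAt (fun x => ∫ θ in (0:ℝ)..π, Real.log (U x θ) * g θ)
      (∫ θ in (0:ℝ)..π, (2 * Real.cos θ + 2 * r) / U r θ * g θ) r := by
  obtain ⟨hr0, hrt⟩ := hr
  have ht0 : 0 ≤ t := le_trans hr0 hrt
  have hrabs : |r| ≤ t := by rwa [abs_of_nonneg hr0]
  have hCg0 : 0 ≤ Cg := le_trans (abs_nonneg _) (hCg 0)
  have hε : (0:ℝ) < (1 - t) / 2 := by linarith
  have hxabs : ∀ x ∈ Metric.ball r ((1 - t) / 2), |x| ≤ (1 + t) / 2 := by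
    intro x hx
    have hd : |x - r| < (1 - t) / 2 := by simpa [Real.dist_eq] using hx
    calc |x| = |r + (x - r)| := by ring_nf
    _ ≤ |r| + |x - r| := abs_add_le _ _
    _ ≤ (1 + t) / 2 := by linarith [hrabs, hd.le]
  have ht2 : (1 + t) / 2 < 1 := by linarith
  have hUx : ∀ x ∈ Metric.ball r ((1 - t) / 2), ∀ θ, ((1 - t) / 2) ^ 2 ≤ U x θ := by
    intro x hx θ
    have h := U_lower (hxabs x hx) ht2 θ
    have e : 1 - (1 + t) / 2 = (1 - t) / 2 := by ring
    rwa [e] at h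
  have hUxpos : ∀ x ∈ Metric.ball r ((1 - t) / 2), ∀ θ, 0 < U x θ := by
    intro x hx θ
    exact lt_of_lt_of_le (by positivity) (hUx x hx θ)
  have main := intervalIntegral.hasDerivAt_integral_of_dominated_loc_of_deriv_le
    (F := fun x θ => Real.log (U x θ) * g θ)
    (F' := fun x θ => (2 * Real.cos θ + 2 * x) / U x θ * g θ)
    (x₀ := r) (a := 0) (b := π) (μ := volume)
    (bound := fun _ => 16 / (1 - t) ^ 2 * Cg) (Metric.ball_mem_nhds r hε)
    (Filter.Eventually.of_forall fun x =>
      ((Real.measurable_log.comp (continuous_U x).measurable).mul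
        hg.measurable).aestronglyMeasurable)
    ((((continuous_U r).log (fun θ => U_ne hrabs ht1 θ)).mul hg).intervalIntegrable _ _)
    ((((continuous_const.mul Real.continuous_cos).add continuous_const).div (continuous_U r)
        (fun θ => U_ne hrabs ht1 θ)).mul hg).aestronglyMeasurable
    ?_ (intervalIntegrable_const) ?_
  · exact main.2
  · -- bound
    filter_upwards with θ _ x hx
    have h1 : |2 * Real.cos θ + 2 * x| ≤ 4 := by
      have hc := Real.abs_cos_le_one θ
      have hxa := hxabs x hx
      calc |2 * Real.cos θ + 2 * x| ≤ |2 * Real.cos θ| + |2 * x| := abs_add_le _ _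
      _ = 2 * |Real.cos θ| + 2 * |x| := by
          rw [abs_mul, abs_mul]; norm_num
      _ ≤ 4 := by linarith
    have h2 := hUx x hx θ
    have h2' : (0:ℝ) < ((1 - t) / 2) ^ 2 := by positivity
    have hUpos := hUxpos x hx θ
    rw [Real.norm_eq_abs, abs_mul, abs_div, abs_of_pos hUpos]
    calc |2 * Real.cos θ + 2 * x| / U x θ * |g θ|
        ≤ 4 / ((1 - t) / 2) ^ 2 * Cg := by
          apply mul_le_mul _ (hCg θ) (abs_nonneg _) (by positivity)
          exact div_le_div₀ (by norm_num) h1 h2' h2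
    _ = 16 / (1 - t) ^ 2 * Cg := by
          rw [div_pow]
          rw [div_div_eq_mul_div]
          norm_num
  · -- differentiability
    filter_upwards with θ _ x hx
    exact ((hasDerivAt_U_param θ x).log (hUxpos x hx θ).ne').mul_const (g θ)

/-- `∫_0^π log(1+2t cos θ+t²) dθ = 0`. -/
lemma int_log_U {t : ℝ} (h0 : 0 ≤ t) (h1 : t < 1) :
    ∫ θ in (0:ℝ)..π, Real.log (U t θ) = 0 := by
  have key : ∀ r ∈ uIcc 0 t,
      HasDerivAt (fun x => ∫ θ in (0:ℝ)..π, Real.log (U x θ) * 1) 0 r := by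
    intro r hr
    rw [uIcc_of_le h0] at hr
    have h := hasDerivAt_int_log_mul (fun _ => 1) continuous_const 1 (by norm_num) h1 hr
    have hval : ∫ θ in (0:ℝ)..π, (2 * Real.cos θ + 2 * r) / U r θ * 1 = 0 := by
      have hr0 : 0 ≤ r := hr.1
      have hr1 : r < 1 := lt_of_le_of_lt hr.2 h1
      have hrabs : |r| ≤ r := abs_le_self' hr0
      rcases eq_or_lt_of_le hr0 with h | hrpos
      · have : ∀ θ ∈ uIcc (0:ℝ) π, (2 * Real.cos θ + 2 * r) / U r θ * 1
            = 2 * Real.cos θ := by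
          intro θ _
          rw [← h]
          simp [U]
        rw [intervalIntegral.integral_congr this]
        rw [intervalIntegral.integral_const_mul, integral_cos]
        simp
      · have hrne : r ≠ 0 := hrpos.ne'
        have hUne : ∀ θ, U r θ ≠ 0 := fun θ => U_ne hrabs hr1 θ
        have hid : ∀ θ ∈ uIcc (0:ℝ) π, (2 * Real.cos θ + 2 * r) / U r θ * 1
            = 1 / r + (r ^ 2 - 1) / r * (1 / U r θ) := by
          intro θ _
          have h := hUne θ
          field_simp
          rw [U]
          ring
        rw [intervalIntegral.integral_congr hid]
        have hcont2 : Continuous (fun θ => (r ^ 2 - 1) / r * (1 / U r θ)) :=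
          continuous_const.mul (continuous_const.div (continuous_U r) hUne)
        rw [intervalIntegral.integral_add (intervalIntegrable_const)
          (hcont2.intervalIntegrable _ _)]
        rw [intervalIntegral.integral_const_mul, int_one_div hr0 hr1]
        have h12 : 1 - r ^ 2 ≠ 0 := by nlinarith
        simp only [intervalIntegral.integral_const, smul_eq_mul, sub_zero]
        field_simp
        ring
    rwa [hval] at h
  have ftc := intervalIntegral.integral_eq_sub_of_hasDerivAt key
    (_root_.intervalIntegrable_const (c := (0:ℝ)))
  simp only [intervalIntegral.integral_zero] at ftc
  have h0' : ∫ θ in (0:ℝ)..π, Real.log (U 0 θ) * 1 = 0 := by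
    have : ∀ θ ∈ uIcc (0:ℝ) π, Real.log (U 0 θ) * 1 = 0 := by
      intro θ _; simp [U]
    rw [intervalIntegral.integral_congr this]; simp
  have := ftc.symm
  rw [h0'] at this
  have h2 : ∫ θ in (0:ℝ)..π, Real.log (U t θ) * 1 = 0 := by linarith
  simpa using h2


/-- `∫_0^π log(U t θ)/U t θ dθ = 2π log(1-t²)/(1-t²)` -/
lemma int_log_div_U {t : ℝ} (h0 : 0 < t) (h1 : t < 1) :
    ∫ θ in (0:ℝ)..π, Real.log (U t θ) * (1 / U t θ)
      = 2 * π * Real.log (1 - t ^ 2) / (1 - t ^ 2) := by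
  have htabs : |t| ≤ t := abs_le_self' h0.le
  have hUtne : ∀ θ, U t θ ≠ 0 := fun θ => U_ne htabs h1 θ
  have hUtpos : ∀ θ, 0 < U t θ := fun θ => U_pos htabs h1 θ
  have ht2 : (0:ℝ) < 1 - t ^ 2 := by nlinarith
  have hg : Continuous (fun θ => 1 / U t θ) := continuous_const.div (continuous_U t) hUtne
  have h1t : (0:ℝ) < 1 - t := by linarith
  have hCg : ∀ θ, |1 / U t θ| ≤ 1 / (1 - t) ^ 2 := by
    intro θ
    rw [abs_of_pos (one_div_pos.mpr (hUtpos θ))]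
    exact one_div_le_one_div_of_le (by positivity) (U_lower htabs h1 θ)
  set m : ℝ → ℝ := fun s => ∫ θ in (0:ℝ)..π, Real.log (U s θ) * (1 / U t θ) with hm
  -- derivative of m on Ioo 0 t
  have hderiv : ∀ s ∈ Ioo (0:ℝ) t, HasDerivAt m
      (-2 * π * t / ((1 - t ^ 2) * (1 - s * t))) s := by
    intro s hs
    obtain ⟨hs0, hst⟩ := hs
    have hsabs : |s| ≤ t := by rw [abs_of_nonneg hs0.le]; exact hst.le
    have hs1 : s < 1 := hst.trans h1
    have hsabs' : |s| ≤ s := abs_le_self' hs0.le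
    have hUsne : ∀ θ, U s θ ≠ 0 := fun θ => U_ne hsabs' hs1 θ
    have h := hasDerivAt_int_log_mul (fun θ => 1 / U t θ) hg _ hCg h1 ⟨hs0.le, hst.le⟩
    have hts : t - s ≠ 0 := (sub_pos.mpr hst).ne'
    have hst1 : 1 - s * t ≠ 0 := by nlinarith
    have htne : t ≠ 0 := h0.ne'
    have hB0 : (t - s) * (1 - s * t) ≠ 0 := mul_ne_zero hts hst1
    have hid : ∀ θ ∈ uIcc (0:ℝ) π,
        (2 * Real.cos θ + 2 * s) / U s θ * (1 / U t θ)
          = ((1 - s * ((2 * s * t - 1 - t ^ 2) / ((t - s) * (1 - s * t)))) / t) * (1 / U s θ)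
            + ((2 * s * t - 1 - t ^ 2) / ((t - s) * (1 - s * t))) * (1 / U t θ) := by
      intro θ _
      have h1' : (1 + 2 * s * Real.cos θ + s ^ 2) ≠ 0 := by simpa [U] using hUsne θ
      have h2' : (1 + 2 * t * Real.cos θ + t ^ 2) ≠ 0 := by simpa [U] using hUtne θ
      have h1'' := hUsne θ
      have h2'' := hUtne θ
      field_simp
      simp only [U]
      ring
    have hval : (∫ θ in (0:ℝ)..π, (2 * Real.cos θ + 2 * s) / U s θ * (1 / U t θ))
        = -2 * π * t / ((1 - t ^ 2) * (1 - s * t)) := by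
      rw [intervalIntegral.integral_congr hid]
      have hcA : Continuous (fun θ =>
          ((1 - s * ((2 * s * t - 1 - t ^ 2) / ((t - s) * (1 - s * t)))) / t) * (1 / U s θ)) :=
        continuous_const.mul (continuous_const.div (continuous_U s) hUsne)
      have hcB : Continuous (fun θ =>
          ((2 * s * t - 1 - t ^ 2) / ((t - s) * (1 - s * t))) * (1 / U t θ)) :=
        continuous_const.mul hg
      rw [intervalIntegral.integral_add (hcA.intervalIntegrable _ _)
        (hcB.intervalIntegrable _ _), intervalIntegral.integral_const_mul,
        intervalIntegral.integral_const_mul, int_one_div hs0.le hs1, int_one_div h0.le h1]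
      have hs2 : 1 - s ^ 2 ≠ 0 := by nlinarith
      field_simp
      ring
    rwa [hval] at h
  -- continuity of m on Icc 0 t
  have hcont : ContinuousOn m (Icc 0 t) := by
    apply LipschitzOnWith.continuousOn (K := Real.toNNReal
      (4 / (1 - t) ^ 2 * (1 / (1 - t) ^ 2) * π))
    apply LipschitzOnWith.of_dist_le_mul
    intro x hx y hy
    rw [Real.dist_eq, Real.dist_eq, hm]
    have hsub : (∫ θ in (0:ℝ)..π, Real.log (U x θ) * (1 / U t θ))
        - ∫ θ in (0:ℝ)..π, Real.log (U y θ) * (1 / U t θ)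
        = ∫ θ in (0:ℝ)..π, (Real.log (U x θ) - Real.log (U y θ)) * (1 / U t θ) := by
      rw [← intervalIntegral.integral_sub]
      · congr 1; ext θ; ring
      · have hxa : |x| ≤ t := by rw [abs_of_nonneg hx.1]; exact hx.2
        exact (((continuous_U x).log (fun θ => U_ne hxa h1 θ)).mul hg).intervalIntegrable _ _
      · have hya : |y| ≤ t := by rw [abs_of_nonneg hy.1]; exact hy.2
        exact (((continuous_U y).log (fun θ => U_ne hya h1 θ)).mul hg).intervalIntegrable _ _
    rw [hsub]
    have hb : ∀ θ ∈ Set.uIoc (0:ℝ) π, ‖(Real.log (U x θ) - Real.log (U y θ)) * (1 / U t θ)‖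
        ≤ 4 / (1 - t) ^ 2 * (1 / (1 - t) ^ 2) * |x - y| := by
      intro θ _
      rw [Real.norm_eq_abs, abs_mul]
      have hlip : |Real.log (U x θ) - Real.log (U y θ)| ≤ 4 / (1 - t) ^ 2 * |x - y| := by
        have := Convex.norm_image_sub_le_of_norm_hasDerivWithin_le
          (f := fun r => Real.log (U r θ)) (f' := fun r => (2 * Real.cos θ + 2 * r) / U r θ)
          (s := Icc (0:ℝ) t) (C := 4 / (1 - t) ^ 2)
          (fun r hr => ((hasDerivAt_U_param θ r).log
            (U_pos (by rw [abs_of_nonneg hr.1]; exact hr.2) h1 θ).ne').hasDerivWithinAt)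
          ?_ (convex_Icc _ _) hy hx
        · simpa [Real.norm_eq_abs] using this
        · intro r hr
          have hra : |r| ≤ t := by rw [abs_of_nonneg hr.1]; exact hr.2
          have hUl := U_lower hra h1 θ
          have hUp := U_pos hra h1 θ
          rw [Real.norm_eq_abs, abs_div, abs_of_pos hUp]
          have hn : |2 * Real.cos θ + 2 * r| ≤ 4 := by
            have hc := Real.abs_cos_le_one θ
            calc |2 * Real.cos θ + 2 * r| ≤ |2 * Real.cos θ| + |2 * r| := abs_add_le _ _
            _ = 2 * |Real.cos θ| + 2 * |r| := by rw [abs_mul, abs_mul]; norm_num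
            _ ≤ 4 := by have := hra.trans h1.le; linarith [abs_nonneg r]
          exact div_le_div₀ (by norm_num) hn (by positivity) hUl
      have hg' : |1 / U t θ| ≤ 1 / (1 - t) ^ 2 := hCg θ
      calc |Real.log (U x θ) - Real.log (U y θ)| * |1 / U t θ|
          ≤ (4 / (1 - t) ^ 2 * |x - y|) * (1 / (1 - t) ^ 2) :=
            mul_le_mul hlip hg' (abs_nonneg _) (by positivity)
      _ = 4 / (1 - t) ^ 2 * (1 / (1 - t) ^ 2) * |x - y| := by ring
    have := intervalIntegral.norm_integral_le_of_norm_le_const hb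
    rw [Real.norm_eq_abs] at this
    calc |∫ θ in (0:ℝ)..π, (Real.log (U x θ) - Real.log (U y θ)) * (1 / U t θ)|
        ≤ 4 / (1 - t) ^ 2 * (1 / (1 - t) ^ 2) * |x - y| * |π - 0| := this
    _ ≤ Real.toNNReal (4 / (1 - t) ^ 2 * (1 / (1 - t) ^ 2) * π) * |x - y| := by
        rw [sub_zero, abs_of_pos Real.pi_pos]
        rw [Real.coe_toNNReal _ (by positivity)]
        ring_nf
        exact le_refl _
  -- FTC
  have hint : IntervalIntegrable (fun s => -2 * π * t / ((1 - t ^ 2) * (1 - s * t)))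
      volume 0 t := by
    apply ContinuousOn.intervalIntegrable
    apply ContinuousOn.div continuousOn_const
    · fun_prop
    · intro s hs
      rw [uIcc_of_le h0.le] at hs
      have : s * t ≤ t * t := mul_le_mul_of_nonneg_right hs.2 h0.le
      have : s * t < 1 := by nlinarith
      have : 1 - s * t > 0 := by linarith
      positivity
  have ftc := intervalIntegral.integral_eq_sub_of_hasDeriv_right_of_le h0.le hcont
    (fun s hs => (hderiv s hs).hasDerivWithinAt) hint
  -- value of the s-integral
  have hsval : ∫ s in (0:ℝ)..t, -2 * π * t / ((1 - t ^ 2) * (1 - s * t))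
      = 2 * π * Real.log (1 - t ^ 2) / (1 - t ^ 2) := by
    have hone : ∀ s ∈ uIcc (0:ℝ) t, HasDerivAt
        (fun s => 2 * π / (1 - t ^ 2) * Real.log (1 - s * t))
        (-2 * π * t / ((1 - t ^ 2) * (1 - s * t))) s := by
      intro s hs
      rw [uIcc_of_le h0.le] at hs
      have h1st : 0 < 1 - s * t := by nlinarith [hs.1, hs.2, mul_le_mul_of_nonneg_right hs.2 h0.le]
      have hinner : HasDerivAt (fun s : ℝ => 1 - s * t) (-t) s := by
        simpa using ((hasDerivAt_id s).mul_const t).const_sub 1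
      have := (hinner.log h1st.ne').const_mul (2 * π / (1 - t ^ 2))
      refine this.congr_deriv (Eq.symm ?_)
      field_simp
    have := intervalIntegral.integral_eq_sub_of_hasDerivAt hone hint
    rw [this]
    simp only [mul_zero, zero_mul, sub_zero, Real.log_one]
    field_simp
  rw [hsval] at ftc
  have hm0 : m 0 = 0 := by
    rw [hm]
    simp only
    have : ∀ θ ∈ uIcc (0:ℝ) π, Real.log (U 0 θ) * (1 / U t θ) = 0 := by
      intro θ _; simp [U]
    rw [intervalIntegral.integral_congr this]; simp
  have : m t = 2 * π * Real.log (1 - t ^ 2) / (1 - t ^ 2) := by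
    rw [hm0, sub_zero] at ftc; exact ftc.symm ▸ rfl
  simpa [hm] using this



variable {t : ℝ}

lemma hasDerivAt_U_theta (t θ : ℝ) :
    HasDerivAt (fun θ => U t θ) (-(2 * t * Real.sin θ)) θ := by
  have h1 : HasDerivAt (fun θ : ℝ => 2 * t * Real.cos θ) (2 * t * -Real.sin θ) θ :=
    (Real.hasDerivAt_cos θ).const_mul (2 * t)
  have := (h1.const_add 1).add_const (t ^ 2)
  simpa [U, mul_comm, mul_assoc] using this

lemma hasDerivAt_v (h0 : 0 < t) (h1 : t < 1) (θ : ℝ) :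
    HasDerivAt (fun θ => -(1 / (2 * t)) * Real.log (U t θ)) (Real.sin θ / U t θ) θ := by
  have hUne : U t θ ≠ 0 := U_ne (abs_le_self' h0.le) h1 θ
  have := ((hasDerivAt_U_theta t θ).log hUne).const_mul (-(1 / (2 * t)))
  refine this.congr_deriv (Eq.symm ?_)
  field_simp

lemma U_pi : U t π = (1 - t) ^ 2 := by simp [U]; ring

lemma cont_sin_div (h0 : 0 < t) (h1 : t < 1) :
    Continuous (fun θ => Real.sin θ / U t θ) :=
  Real.continuous_sin.div (continuous_U t) (fun θ => U_ne (abs_le_self' h0.le) h1 θ)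

lemma cont_logU (h0 : 0 < t) (h1 : t < 1) : Continuous (fun θ => Real.log (U t θ)) :=
  (continuous_U t).log (fun θ => U_ne (abs_le_self' h0.le) h1 θ)

/-- `∫ θ sin θ / U = -(π/t) log (1-t)` -/
lemma int_theta_sin (h0 : 0 < t) (h1 : t < 1) :
    ∫ θ in (0:ℝ)..π, θ * (Real.sin θ / U t θ) = -(π / t) * Real.log (1 - t) := by
  have ibp := intervalIntegral.integral_mul_deriv_eq_deriv_mul
    (a := (0:ℝ)) (b := π) (u := fun θ => θ) (u' := fun _ => (1:ℝ))
    (v := fun θ => -(1 / (2 * t)) * Real.log (U t θ))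
    (v' := fun θ => Real.sin θ / U t θ)
    (fun θ _ => hasDerivAt_id θ)
    (fun θ _ => hasDerivAt_v h0 h1 θ)
    (intervalIntegrable_const)
    ((cont_sin_div h0 h1).intervalIntegrable _ _)
  rw [ibp]
  beta_reduce
  have e1 : ∫ θ in (0:ℝ)..π, 1 * (-(1 / (2 * t)) * Real.log (U t θ)) = 0 := by
    simp only [one_mul]
    rw [intervalIntegral.integral_const_mul, int_log_U h0.le h1, mul_zero]
  rw [e1, U_pi]
  rw [Real.log_pow]
  simp only [Nat.cast_ofNat, sub_zero, zero_mul, mul_zero]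
  field_simp

/-- `K = ∫ arctan g · sin/U` -/
lemma int_arctan_sin (h0 : 0 < t) (h1 : t < 1) :
    ∫ θ in (0:ℝ)..π, Real.arctan (t * Real.sin θ / (1 + t * Real.cos θ)) * (Real.sin θ / U t θ)
      = (t ^ 2 - 1) / (4 * t) * (2 * π * Real.log (1 - t ^ 2) / (1 - t ^ 2)) := by
  have hUne : ∀ θ, U t θ ≠ 0 := fun θ => U_ne (abs_le_self' h0.le) h1 θ
  have ibp := intervalIntegral.integral_mul_deriv_eq_deriv_mul
    (a := (0:ℝ)) (b := π)
    (u := fun θ => Real.arctan (t * Real.sin θ / (1 + t * Real.cos θ)))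
    (u' := fun θ => t * (Real.cos θ + t) / U t θ)
    (v := fun θ => -(1 / (2 * t)) * Real.log (U t θ))
    (v' := fun θ => Real.sin θ / U t θ)
    (fun θ _ => hasDerivAt_arctanG h0.le h1 θ)
    (fun θ _ => hasDerivAt_v h0 h1 θ)
    (((continuous_const.mul (Real.continuous_cos.add continuous_const)).div
      (continuous_U t) hUne).intervalIntegrable _ _)
    ((cont_sin_div h0 h1).intervalIntegrable _ _)
  rw [ibp]
  beta_reduce
  have hb : Real.arctan (t * Real.sin π / (1 + t * Real.cos π)) = 0 := by
    simp [Real.sin_pi]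
  have ha : Real.arctan (t * Real.sin 0 / (1 + t * Real.cos 0)) = 0 := by
    simp [Real.sin_zero]
  rw [hb, ha, zero_mul, zero_mul, sub_zero, zero_sub]
  -- remaining: -∫ (t(cos+t)/U)·(-(1/2t) log U)
  have hcongr : ∀ θ ∈ uIcc (0:ℝ) π,
      t * (Real.cos θ + t) / U t θ * (-(1 / (2 * t)) * Real.log (U t θ))
        = -(1 / (4 * t)) * Real.log (U t θ)
          + (-((t ^ 2 - 1) / (4 * t))) * (Real.log (U t θ) * (1 / U t θ)) := by
    intro θ _
    have hU := hUne θ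
    have hUe : (1 + 2 * t * Real.cos θ + t ^ 2) ≠ 0 := by simpa [U] using hU
    field_simp
    simp only [U]
    ring
  rw [intervalIntegral.integral_congr hcongr]
  have hc1 : Continuous (fun θ => -(1 / (4 * t)) * Real.log (U t θ)) :=
    continuous_const.mul (cont_logU h0 h1)
  have hc2 : Continuous (fun θ =>
      (-((t ^ 2 - 1) / (4 * t))) * (Real.log (U t θ) * (1 / U t θ))) :=
    continuous_const.mul ((cont_logU h0 h1).mul
      (continuous_const.div (continuous_U t) hUne))
  rw [intervalIntegral.integral_add (hc1.intervalIntegrable _ _) (hc2.intervalIntegrable _ _)]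
  rw [intervalIntegral.integral_const_mul, intervalIntegral.integral_const_mul]
  rw [int_log_U h0.le h1, int_log_div_U h0 h1]
  ring

/-- `∫ sin² θ/U = π/2` -/
lemma int_sin_sq (h0 : 0 < t) (h1 : t < 1) :
    ∫ θ in (0:ℝ)..π, Real.sin θ ^ 2 / U t θ = π / 2 := by
  have hUne : ∀ θ, U t θ ≠ 0 := fun θ => U_ne (abs_le_self' h0.le) h1 θ
  have ht2 : 1 - t ^ 2 ≠ 0 := by nlinarith
  have hcongr : ∀ θ ∈ uIcc (0:ℝ) π,
      Real.sin θ ^ 2 / U t θ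
        = ((1 + t ^ 2) / (4 * t ^ 2) + (-(1 / (2 * t))) * Real.cos θ)
          + (-((1 - t ^ 2) ^ 2 / (4 * t ^ 2))) * (1 / U t θ) := by
    intro θ _
    have hUe : (1 + 2 * t * Real.cos θ + t ^ 2) ≠ 0 := by simpa [U] using hUne θ
    have hsin2 : Real.sin θ ^ 2 = 1 - Real.cos θ ^ 2 := by
      linear_combination Real.sin_sq_add_cos_sq θ
    have hU := hUne θ
    rw [hsin2]
    field_simp
    simp only [U]
    ring
  rw [intervalIntegral.integral_congr hcongr]
  have hcB : Continuous (fun θ => (-((1 - t ^ 2) ^ 2 / (4 * t ^ 2))) * (1 / U t θ)) :=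
    continuous_const.mul (continuous_const.div (continuous_U t) hUne)
  have hcA : Continuous (fun θ => (1 + t ^ 2) / (4 * t ^ 2) + (-(1 / (2 * t))) * Real.cos θ) :=
    continuous_const.add (continuous_const.mul Real.continuous_cos)
  rw [intervalIntegral.integral_add (hcA.intervalIntegrable _ _) (hcB.intervalIntegrable _ _)]
  rw [intervalIntegral.integral_add (g := fun x => -(1 / (2 * t)) * Real.cos x) (intervalIntegrable_const)
    ((continuous_const.mul Real.continuous_cos).intervalIntegrable _ _)]
  rw [intervalIntegral.integral_const_mul, intervalIntegral.integral_const_mul,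
    integral_cos, int_one_div h0.le h1]
  simp only [Real.sin_pi, Real.sin_zero, sub_zero, mul_zero, intervalIntegral.integral_const,
    smul_eq_mul, sub_zero]
  field_simp
  ring

/-- The main trigonometric integral `A`. -/
lemma int_A (h0 : 0 < t) (h1 : t < 1) :
    ∫ θ in (0:ℝ)..π, Real.log (U t θ) * (Real.sin θ ^ 2 / U t θ)
      = -(π / 2) - π * (1 - t ^ 2) * Real.log (1 - t ^ 2) / (2 * t ^ 2) := by
  have hUne : ∀ θ, U t θ ≠ 0 := fun θ => U_ne (abs_le_self' h0.le) h1 θ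
  have hUpos : ∀ θ, 0 < U t θ := fun θ => U_pos (abs_le_self' h0.le) h1 θ
  have ht2 : 1 - t ^ 2 ≠ 0 := by nlinarith
  -- w and its derivative
  have hw : ∀ θ, HasDerivAt (fun θ => θ / 2 - Real.sin θ / (2 * t)
      + (1 - t ^ 2) / (2 * t ^ 2) * Real.arctan (t * Real.sin θ / (1 + t * Real.cos θ)))
      (Real.sin θ ^ 2 / U t θ) θ := by
    intro θ
    have h1' : HasDerivAt (fun θ : ℝ => θ / 2) (1 / 2) θ := by
      simpa using (hasDerivAt_id θ).div_const 2
    have h2' : HasDerivAt (fun θ => Real.sin θ / (2 * t)) (Real.cos θ / (2 * t)) θ :=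
      (Real.hasDerivAt_sin θ).div_const (2 * t)
    have h3' := (hasDerivAt_arctanG h0.le h1 θ).const_mul ((1 - t ^ 2) / (2 * t ^ 2))
    have h := (h1'.sub h2').add h3'
    refine h.congr_deriv (Eq.symm ?_)
    have hUe : (1 + 2 * t * Real.cos θ + t ^ 2) ≠ 0 := by simpa [U] using hUne θ
    have hsin2 : Real.sin θ ^ 2 = 1 - Real.cos θ ^ 2 := by
      linear_combination Real.sin_sq_add_cos_sq θ
    have hU := hUne θ
    rw [hsin2]
    field_simp
    simp only [U]
    ring
  have ibp := intervalIntegral.integral_mul_deriv_eq_deriv_mul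
    (a := (0:ℝ)) (b := π)
    (u := fun θ => Real.log (U t θ))
    (u' := fun θ => -(2 * t * Real.sin θ) / U t θ)
    (v := fun θ => θ / 2 - Real.sin θ / (2 * t)
      + (1 - t ^ 2) / (2 * t ^ 2) * Real.arctan (t * Real.sin θ / (1 + t * Real.cos θ)))
    (v' := fun θ => Real.sin θ ^ 2 / U t θ)
    (fun θ _ => (hasDerivAt_U_theta t θ).log (hUne θ))
    (fun θ _ => hw θ)
    (((continuous_const.mul Real.continuous_sin).neg.div (continuous_U t)
      hUne).intervalIntegrable _ _)
    ((((Real.continuous_sin.pow 2)).div (continuous_U t) hUne).intervalIntegrable _ _)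
  rw [ibp]
  beta_reduce
  -- boundary values
  have hbpi : (π / 2 - Real.sin π / (2 * t)
      + (1 - t ^ 2) / (2 * t ^ 2) * Real.arctan (t * Real.sin π / (1 + t * Real.cos π)))
      = π / 2 := by simp [Real.sin_pi]
  have hb0 : ((0:ℝ) / 2 - Real.sin 0 / (2 * t)
      + (1 - t ^ 2) / (2 * t ^ 2) * Real.arctan (t * Real.sin 0 / (1 + t * Real.cos 0)))
      = 0 := by simp [Real.sin_zero]
  rw [hbpi, hb0, mul_zero, sub_zero, U_pi, Real.log_pow]
  -- the remaining integral
  have hcongr : ∀ θ ∈ uIcc (0:ℝ) π,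
      -(2 * t * Real.sin θ) / U t θ * (θ / 2 - Real.sin θ / (2 * t)
        + (1 - t ^ 2) / (2 * t ^ 2) * Real.arctan (t * Real.sin θ / (1 + t * Real.cos θ)))
      = (-t) * (θ * (Real.sin θ / U t θ)) + Real.sin θ ^ 2 / U t θ
        + (-((1 - t ^ 2) / t)) * (Real.arctan (t * Real.sin θ / (1 + t * Real.cos θ))
            * (Real.sin θ / U t θ)) := by
    intro θ _
    have hU := hUne θ
    field_simp
    ring
  rw [intervalIntegral.integral_congr hcongr]
  have hc1 : Continuous (fun θ => (-t) * (θ * (Real.sin θ / U t θ))) :=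
    continuous_const.mul (continuous_id.mul (cont_sin_div h0 h1))
  have hc2 : Continuous (fun θ => Real.sin θ ^ 2 / U t θ) :=
    (Real.continuous_sin.pow 2).div (continuous_U t) hUne
  have hc3 : Continuous (fun θ => (-((1 - t ^ 2) / t)) *
      (Real.arctan (t * Real.sin θ / (1 + t * Real.cos θ)) * (Real.sin θ / U t θ))) := by
    apply continuous_const.mul
    apply Continuous.mul _ (cont_sin_div h0 h1)
    apply Real.continuous_arctan.comp
    exact (continuous_const.mul Real.continuous_sin).div
      (continuous_const.add (continuous_const.mul Real.continuous_cos))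
      (fun θ => by
        have : 0 < 1 + t * Real.cos θ := by
          nlinarith [Real.neg_one_le_cos θ, Real.cos_le_one θ]
        exact this.ne')
  rw [intervalIntegral.integral_add (f := fun θ => (-t) * (θ * (Real.sin θ / U t θ)) + Real.sin θ ^ 2 / U t θ) (Continuous.intervalIntegrable (hc1.add hc2) _ _) (hc3.intervalIntegrable _ _)]
  rw [intervalIntegral.integral_add (hc1.intervalIntegrable _ _) (hc2.intervalIntegrable _ _)]
  rw [intervalIntegral.integral_const_mul, intervalIntegral.integral_const_mul]
  rw [int_theta_sin h0 h1, int_sin_sq h0 h1, int_arctan_sin h0 h1]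
  have htne : t ≠ 0 := h0.ne'
  field_simp
  ring

end MPaux

end

open MPaux in
theorem MP_log_moment (c : ℝ) (hc : 1 < c) :
    (1 / (2 * Real.pi)) * ∫ l in ((1 - Real.sqrt c)^2)..((1 + Real.sqrt c)^2),
        Real.log l * Real.sqrt (((1 + Real.sqrt c)^2 - l) * (l - (1 - Real.sqrt c)^2)) / l
      = -1 + c * Real.log c - (c - 1) * Real.log (c - 1) := by
  have hc0 : (0:ℝ) < c := by linarith
  set q := Real.sqrt c with hqdef
  have hq2 : q ^ 2 = c := Real.sq_sqrt hc0.le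
  have hq1 : 1 < q := by
    have h := Real.sqrt_lt_sqrt (by norm_num : (0:ℝ) ≤ 1) hc
    simpa using h
  have hq0 : 0 < q := by linarith
  set t : ℝ := 1 / q with htdef
  have ht0 : 0 < t := by positivity
  have ht1 : t < 1 := by rw [htdef, div_lt_one hq0]; linarith
  have htabs : |t| ≤ t := abs_le_self' ht0.le
  have hUne : ∀ θ, U t θ ≠ 0 := fun θ => U_ne htabs ht1 θ
  have hUpos : ∀ θ, 0 < U t θ := fun θ => U_pos htabs ht1 θ
  set φ : ℝ → ℝ := fun θ => 1 + q ^ 2 + 2 * q * Real.cos θ with hφ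
  have hφpos : ∀ θ, 0 < φ θ := by
    intro θ; simp only [hφ]; nlinarith [Real.neg_one_le_cos θ]
  have hder : ∀ x ∈ uIcc π (0:ℝ), HasDerivAt φ (-(2 * q * Real.sin x)) x := by
    intro x _
    have h := ((Real.hasDerivAt_cos x).const_mul (2 * q)).const_add (1 + q ^ 2)
    simp only [hφ]
    refine h.congr_deriv (Eq.symm ?_)
    ring
  have hcont' : ContinuousOn (fun x => -(2 * q * Real.sin x)) (uIcc π 0) := by fun_prop
  set g : ℝ → ℝ := fun l =>
    Real.log l * Real.sqrt (((1 + q) ^ 2 - l) * (l - (1 - q) ^ 2)) / l with hg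
  have hgc : ContinuousOn g (φ '' uIcc π 0) := by
    have hsubpos : ∀ l ∈ φ '' uIcc π 0, (0:ℝ) < l := by
      rintro l ⟨θ, _, rfl⟩; exact hφpos θ
    apply ContinuousOn.div
    · apply ContinuousOn.mul
      · exact Real.continuousOn_log.mono (fun l hl => (hsubpos l hl).ne')
      · exact (Real.continuous_sqrt.comp (by fun_prop)).continuousOn
    · exact continuous_id.continuousOn
    · exact fun l hl => (hsubpos l hl).ne'
  have hsub := intervalIntegral.integral_comp_smul_deriv' hder hcont' hgc
  have hφpi : φ π = (1 - q) ^ 2 := by simp [hφ]; ring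
  have hφ0 : φ 0 = (1 + q) ^ 2 := by simp [hφ]; ring
  rw [hφpi, hφ0] at hsub
  have h1 : (∫ l in ((1 - q) ^ 2)..((1 + q) ^ 2), g l)
      = ∫ θ in (0:ℝ)..π, 2 * q * Real.sin θ * g (φ θ) := by
    rw [← hsub, intervalIntegral.integral_symm, ← intervalIntegral.integral_neg]
    apply intervalIntegral.integral_congr
    intro θ _
    simp only [smul_eq_mul, Function.comp_apply]
    ring
  have h2 : ∀ θ ∈ uIcc (0:ℝ) π, 2 * q * Real.sin θ * g (φ θ)
      = 4 * Real.log (q ^ 2) * (Real.sin θ ^ 2 / U t θ)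
        + 4 * (Real.log (U t θ) * (Real.sin θ ^ 2 / U t θ)) := by
    intro θ hθ
    rw [uIcc_of_le Real.pi_nonneg] at hθ
    have hsin : 0 ≤ Real.sin θ := Real.sin_nonneg_of_nonneg_of_le_pi hθ.1 hθ.2
    have hsq : ((1 + q) ^ 2 - φ θ) * (φ θ - (1 - q) ^ 2) = (2 * q * Real.sin θ) ^ 2 := by
      simp only [hφ]
      linear_combination (-(4 * q ^ 2)) * Real.sin_sq_add_cos_sq θ
    have hUeq : φ θ = q ^ 2 * U t θ := by
      simp only [hφ, U, htdef]
      field_simp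
      ring
    have hUneθ := hUne θ
    have hUposθ := hUpos θ
    simp only [hg]
    rw [hsq, Real.sqrt_sq (by positivity), hUeq,
      Real.log_mul (by positivity) hUneθ]
    field_simp
    ring
  rw [h1, intervalIntegral.integral_congr h2]
  have hc1 : Continuous (fun θ => 4 * Real.log (q ^ 2) * (Real.sin θ ^ 2 / U t θ)) :=
    continuous_const.mul ((Real.continuous_sin.pow 2).div (continuous_U t) hUne)
  have hc2 : Continuous (fun θ =>
      4 * (Real.log (U t θ) * (Real.sin θ ^ 2 / U t θ))) :=
    continuous_const.mul (((continuous_U t).log hUne).mul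
      ((Real.continuous_sin.pow 2).div (continuous_U t) hUne))
  rw [intervalIntegral.integral_add (hc1.intervalIntegrable _ _) (hc2.intervalIntegrable _ _)]
  rw [intervalIntegral.integral_const_mul, intervalIntegral.integral_const_mul]
  rw [int_sin_sq ht0 ht1, int_A ht0 ht1]
  rw [hq2]
  have ht2 : t ^ 2 = 1 / c := by
    rw [htdef, div_pow, one_pow, hq2]
  have hlog : Real.log (1 - t ^ 2) = Real.log (c - 1) - Real.log c := by
    rw [ht2, show 1 - 1 / c = (c - 1) / c by field_simp]
    exact Real.log_div (by linarith) (by linarith)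
  rw [hlog, ht2]
  have hπ : Real.pi ≠ 0 := Real.pi_ne_zero
  field_simp
  ring
end

section
/- ∫_0^∞ 2t·e^t / ((e^t - 1)(e^t + 1)²) dt = π²/8 - ln 2. -/
open Real MeasureTheory Filter

lemma key_int {c : ℝ} (hc : 0 < c) :
    ∫ t in Set.Ioi (0:ℝ), t * Real.exp (-(c*t)) = 1/c^2 := by
  have h := Real.integral_rpow_mul_exp_neg_mul_Ioi (a := 2) (r := c) two_pos hc
  rw [Real.Gamma_two, mul_one] at h
  rw [show ((2:ℝ)-1) = 1 by norm_num] at h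
  simp_rw [Real.rpow_one] at h
  rw [h, show ((2:ℝ)) = ((2:ℕ):ℝ) by norm_num, Real.rpow_natCast, div_pow, one_pow]

lemma key_integrable {c : ℝ} (hc : 0 < c) :
    IntegrableOn (fun t => t * Real.exp (-(c*t))) (Set.Ioi (0:ℝ)) := by
  have h := integrableOn_rpow_mul_exp_neg_mul_rpow (s := 1) (p := 1) (b := c)
    (by norm_num) zero_lt_one hc
  refine h.congr_fun (fun x hx => ?_) measurableSet_Ioi
  simp [Real.rpow_one, neg_mul]

lemma hasSum_odd_sq : HasSum (fun k : ℕ => (1:ℝ)/(2*(k:ℝ)+1)^2) (π^2/8) := by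
  have h := hasSum_zeta_two
  have heven : HasSum (fun k : ℕ => (1:ℝ)/(((2*k : ℕ)):ℝ)^2) (π^2/6/4) := by
    have heq : (fun k : ℕ => (1:ℝ)/(((2*k : ℕ)):ℝ)^2) = fun k : ℕ => ((1:ℝ)/(k:ℝ)^2)/4 := by
      funext k
      rcases eq_or_ne (k:ℝ) 0 with hk | hk
      · simp [hk]
      · push_cast
        field_simp
        ring
    rw [heq]
    exact h.div_const 4
  have hodd_sum : Summable (fun k : ℕ => (1:ℝ)/(((2*k+1 : ℕ)):ℝ)^2) :=
    h.summable.comp_injective (fun a b hab => by omega)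
  obtain ⟨b, hb⟩ := hodd_sum
  have htot := HasSum.even_add_odd (f := fun n : ℕ => (1:ℝ)/(n:ℝ)^2) heven hb
  have hb' : b = π^2/8 := by
    have := htot.unique h
    linarith
  rw [hb'] at hb
  have heq2 : (fun k : ℕ => (1:ℝ)/(2*(k:ℝ)+1)^2)
      = fun k : ℕ => (1:ℝ)/(((2*k+1 : ℕ)):ℝ)^2 := by
    funext k; push_cast; ring
  rw [heq2]
  exact hb

lemma g1_bound {t : ℝ} (ht : 0 < t) :
    t * Real.exp t / (Real.exp (2*t) - 1) ≤ Real.exp (-(1/2) * t) := by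
  set v := Real.exp (t/2) with hv_def
  have hv : 1 < v := Real.one_lt_exp_iff.mpr (by linarith)
  have hv0 : 0 < v := by linarith
  have he1 : Real.exp t = v^2 := by
    rw [hv_def, ← Real.exp_nat_mul]; congr 1; push_cast; ring
  have he2 : Real.exp (2*t) = v^4 := by
    rw [hv_def, ← Real.exp_nat_mul]; congr 1; push_cast; ring
  have he3 : Real.exp (-(1/2)*t) = v⁻¹ := by
    rw [hv_def, ← Real.exp_neg]; ring_nf
  have hsinh : t < v - v⁻¹ := by
    have h := (Real.self_lt_sinh_iff (x := t/2)).mpr (by linarith)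
    rw [Real.sinh_eq, Real.exp_neg] at h
    rw [hv_def]
    linarith
  have hv4 : 1 < v^4 := one_lt_pow₀ hv (by norm_num)
  have hden : 0 < v^4 - 1 := by linarith
  rw [he1, he2, he3, div_le_iff₀ hden]
  have hvinv : v * v⁻¹ = 1 := mul_inv_cancel₀ hv0.ne'
  have hvinv_lt : v⁻¹ < v := by
    have h1 : v⁻¹ < 1 := inv_lt_one_of_one_lt₀ hv
    linarith
  have h5 : t * v^2 ≤ (v - v⁻¹) * v^2 := mul_le_mul_of_nonneg_right hsinh.le (sq_nonneg v)
  have h6 : (v - v⁻¹) * v^2 = v^3 - v := by field_simp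
  have h7 : v⁻¹ * (v^4 - 1) = v^3 - v⁻¹ := by field_simp
  linarith

lemma g1_integrable :
    IntegrableOn (fun t => t * Real.exp t / (Real.exp (2*t) - 1)) (Set.Ioi (0:ℝ)) := by
  refine Integrable.mono (exp_neg_integrableOn_Ioi 0 (by norm_num : (0:ℝ) < 1/2)) ?_ ?_
  · exact ((measurable_id.mul Real.measurable_exp).div
      ((Real.measurable_exp.comp (measurable_const.mul measurable_id)).sub measurable_const)).aestronglyMeasurable
  · filter_upwards [ae_restrict_mem measurableSet_Ioi] with t ht
    have ht' : (0:ℝ) < t := ht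
    have h1 : 1 < Real.exp (2*t) := Real.one_lt_exp_iff.mpr (by linarith)
    rw [Real.norm_eq_abs, Real.norm_eq_abs,
      abs_of_nonneg (div_nonneg (by positivity) (by linarith)),
      abs_of_nonneg (Real.exp_nonneg _)]
    exact g1_bound ht'

lemma hasDerivF (x : ℝ) :
    HasDerivAt (fun t => t / (Real.exp t + 1) + Real.log (1 + Real.exp (-t)))
      (-(x * Real.exp x / (Real.exp x + 1)^2)) x := by
  have hpos : (0:ℝ) < Real.exp x + 1 := by positivity
  have hpos2 : (0:ℝ) < 1 + Real.exp (-x) := by positivity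
  have h1 : HasDerivAt (fun t : ℝ => Real.exp t + 1) (Real.exp x) x :=
    (Real.hasDerivAt_exp x).add_const 1
  have hd1 : HasDerivAt (fun t : ℝ => t / (Real.exp t + 1))
      ((1 * (Real.exp x + 1) - x * Real.exp x) / (Real.exp x + 1)^2) x :=
    (hasDerivAt_id x).div h1 hpos.ne'
  have h2 : HasDerivAt (fun t : ℝ => 1 + Real.exp (-t)) (-Real.exp (-x)) x := by
    have h := (Real.hasDerivAt_exp (-x)).comp x ((hasDerivAt_id x).neg)
    simpa using h.const_add 1
  have hd2 : HasDerivAt (fun t : ℝ => Real.log (1 + Real.exp (-t)))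
      (-Real.exp (-x) / (1 + Real.exp (-x))) x := h2.log hpos2.ne'
  have := hd1.add hd2
  refine this.congr_deriv ?_
  rw [Real.exp_neg]
  have hne : Real.exp x ≠ 0 := (Real.exp_pos x).ne'
  field_simp
  ring

lemma g2_integrable :
    IntegrableOn (fun t => -(t * Real.exp t / (Real.exp t + 1)^2)) (Set.Ioi (0:ℝ)) := by
  refine Integrable.mono (key_integrable one_pos) ?_ ?_
  · exact ((measurable_id.mul Real.measurable_exp).div
      ((Real.measurable_exp.add_const 1).pow_const 2)).neg.aestronglyMeasurable
  · filter_upwards [ae_restrict_mem measurableSet_Ioi] with t ht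
    have ht' : (0:ℝ) < t := ht
    have hp : (0:ℝ) < Real.exp t + 1 := by positivity
    rw [Real.norm_eq_abs, Real.norm_eq_abs, abs_neg,
      abs_of_nonneg (by positivity : (0:ℝ) ≤ t * Real.exp t / (Real.exp t + 1)^2),
      abs_of_nonneg (by positivity : (0:ℝ) ≤ t * Real.exp (-(1*t)))]
    rw [one_mul, Real.exp_neg]
    rw [div_le_iff₀ (by positivity)]
    have he : (0:ℝ) < Real.exp t := Real.exp_pos t
    have : Real.exp t * Real.exp t ≤ (Real.exp t + 1)^2 := by nlinarith
    calc t * Real.exp t = t * (Real.exp t)⁻¹ * (Real.exp t * Real.exp t) := by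
          field_simp
      _ ≤ t * (Real.exp t)⁻¹ * (Real.exp t + 1)^2 := by
          apply mul_le_mul_of_nonneg_left this (by positivity)

lemma partB :
    ∫ t in Set.Ioi (0:ℝ), -(t * Real.exp t / (Real.exp t + 1)^2) = -Real.log 2 := by
  have hlim1 : Tendsto (fun t : ℝ => t / (Real.exp t + 1)) atTop (nhds 0) := by
    apply squeeze_zero' (g := fun t : ℝ => t * Real.exp (-t))
    · filter_upwards [eventually_ge_atTop (0:ℝ)] with t ht
      positivity
    · filter_upwards [eventually_ge_atTop (0:ℝ)] with t ht
      rw [Real.exp_neg, ← div_eq_mul_inv]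
      apply div_le_div_of_nonneg_left ht (Real.exp_pos t)
      linarith [Real.exp_pos t]
    · have h := Real.tendsto_pow_mul_exp_neg_atTop_nhds_zero 1
      simpa using h
  have hlim2 : Tendsto (fun t : ℝ => Real.log (1 + Real.exp (-t))) atTop (nhds 0) := by
    have h1 : Tendsto (fun t : ℝ => 1 + Real.exp (-t)) atTop (nhds 1) := by
      simpa using (Real.tendsto_exp_neg_atTop_nhds_zero).const_add 1
    have := h1.log one_ne_zero
    simpa using this
  have hlim : Tendsto (fun t : ℝ => t / (Real.exp t + 1) + Real.log (1 + Real.exp (-t)))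
      atTop (nhds 0) := by
    simpa using hlim1.add hlim2
  have h := integral_Ioi_of_hasDerivAt_of_tendsto' (a := 0)
    (fun x _ => hasDerivF x) g2_integrable hlim
  rw [h]
  simp [Real.exp_zero]
  norm_num

lemma partA :
    ∫ t in Set.Ioi (0:ℝ), t * Real.exp t / (Real.exp (2*t) - 1) = π^2/8 := by
  have hsum_t : ∀ t ∈ Set.Ioi (0:ℝ),
      t * Real.exp t / (Real.exp (2*t) - 1)
        = ∑' k : ℕ, t * Real.exp (-((2*(k:ℝ)+1)*t)) := by
    intro t ht
    have ht' : (0:ℝ) < t := ht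
    have h1 : ∀ k : ℕ, t * Real.exp (-((2*(k:ℝ)+1)*t))
        = (t * Real.exp (-t)) * (Real.exp (-(2*t)))^k := by
      intro k
      rw [← Real.exp_nat_mul, mul_assoc, ← Real.exp_add]
      congr 2
      ring
    simp_rw [h1]
    rw [tsum_mul_left, tsum_geometric_of_lt_one (Real.exp_nonneg _)
      (Real.exp_lt_one_iff.mpr (by linarith))]
    have he : (0:ℝ) < Real.exp t := Real.exp_pos t
    have h2 : Real.exp (2*t) = Real.exp t * Real.exp t := by
      rw [two_mul, Real.exp_add]
    have h1t : 1 < Real.exp t := Real.one_lt_exp_iff.mpr ht'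
    have hst : Real.exp t * Real.exp t - 1 ≠ 0 := by nlinarith
    rw [Real.exp_neg, Real.exp_neg, h2]
    have hlt : (Real.exp t * Real.exp t)⁻¹ < 1 := inv_lt_one_of_one_lt₀ (by nlinarith)
    have hinv : 1 - (Real.exp t * Real.exp t)⁻¹ ≠ 0 :=
      ne_of_gt (by linarith)
    field_simp
  rw [setIntegral_congr_fun measurableSet_Ioi hsum_t]
  rw [← MeasureTheory.integral_tsum_of_summable_integral_norm
    (F := fun (k : ℕ) (t : ℝ) => t * Real.exp (-((2*(k:ℝ)+1)*t)))
    (μ := volume.restrict (Set.Ioi (0:ℝ)))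
    (fun k => key_integrable (by positivity : (0:ℝ) < 2*(k:ℝ)+1)) ?_]
  · have : ∀ k : ℕ, ∫ t in Set.Ioi (0:ℝ), t * Real.exp (-((2*(k:ℝ)+1)*t))
        = 1/(2*(k:ℝ)+1)^2 := fun k => key_int (by positivity)
    rw [tsum_congr this, hasSum_odd_sq.tsum_eq]
  · have heq : ∀ k : ℕ, (∫ t in Set.Ioi (0:ℝ), ‖t * Real.exp (-((2*(k:ℝ)+1)*t))‖)
        = 1/(2*(k:ℝ)+1)^2 := by
      intro k
      rw [setIntegral_congr_fun measurableSet_Ioi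
        (fun t ht => by
          rw [Real.norm_eq_abs,
            abs_of_nonneg (mul_nonneg (le_of_lt ht) (Real.exp_nonneg _))])]
      exact key_int (by positivity)
    simp_rw [heq]
    exact hasSum_odd_sq.summable

theorem K1_integral :
    ∫ t in Set.Ioi (0:ℝ),
        2 * t * Real.exp t / ((Real.exp t - 1) * (Real.exp t + 1) ^ 2)
      = Real.pi ^ 2 / 8 - Real.log 2 := by
  have heq : ∀ t ∈ Set.Ioi (0:ℝ),
      2 * t * Real.exp t / ((Real.exp t - 1) * (Real.exp t + 1) ^ 2)
        = t * Real.exp t / (Real.exp (2*t) - 1)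
          + -(t * Real.exp t / (Real.exp t + 1)^2) := by
    intro t ht
    have ht' : (0:ℝ) < t := ht
    have h1 : 1 < Real.exp t := Real.one_lt_exp_iff.mpr ht'
    have h2 : Real.exp (2*t) = Real.exp t * Real.exp t := by
      rw [two_mul, Real.exp_add]
    have hne1 : Real.exp t - 1 ≠ 0 := sub_ne_zero.2 h1.ne'
    have hne2 : Real.exp t + 1 ≠ 0 := by positivity
    have hne3 : Real.exp t * Real.exp t - 1 ≠ 0 := by nlinarith
    rw [h2, ← sub_eq_add_neg, div_sub_div _ _ hne3 (pow_ne_zero 2 hne2), div_eq_div_iff (mul_ne_zero hne1 (pow_ne_zero 2 hne2)) (mul_ne_zero hne3 (pow_ne_zero 2 hne2))]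
    ring
  rw [setIntegral_congr_fun measurableSet_Ioi heq,
    MeasureTheory.integral_add g1_integrable g2_integrable, partA, partB]
  ring
end
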